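/- For every instance of the charging game with T=2 time steps and every price profile p∈ℝ², there exists a Nash equilibrium. -/
import Mathlib


/-!
Formalization of the charging game on capacitated energy networks.

An instance consists of a finite directed host graph `H = (V, E)`, `T` time steps
(with per-time-step edge capacities `κE` and demands `d`), and a finite set `B` of
battery agents, each located at a node `loc b`, with battery edges `(b_t, b_{t+1})`
of capacity `κB b t`.
-/

structure ChargingGame where
  /-- households/vertices of the host graph -/
  V : Type
  fintypeV : Fintype V
  decV : DecidableEq V
  /-- number of time steps (time steps are indexed by `Fin T`) -/
  T : ℕ
  T_pos : 0 < T
  /-- directed edges (power lines) of the host graph -/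
  E : Finset (V × V)
  /-- capacity of (the copy of) edge `e` in time step `t` -/
  κE : Fin T → V × V → ℝ
  κE_nonneg : ∀ t e, 0 ≤ κE t e
  /-- demand/supply of node `v` in time step `t` (positive = supply, negative = demand) -/
  d : Fin T → V → ℝ
  /-- the battery agents -/
  B : Type
  fintypeB : Fintype B
  decB : DecidableEq B
  /-- the location of agent `b` -/
  loc : B → V
  /-- capacity of the battery edge `(b_t, b_{t+1})` (only `t` with `t+1 < T` is relevant) -/
  κB : B → Fin T → ℝ
  κB_nonneg : ∀ b t, 0 ≤ κB b t

attribute [instance] ChargingGame.fintypeV ChargingGame.decV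
attribute [instance] ChargingGame.fintypeB ChargingGame.decB

namespace ChargingGame

variable (G : ChargingGame)

/-- Nodes of the time-expanded energy network graph `G`:
grid nodes `(t, v)`, battery nodes `(t, b)`, and `false` = source `x`, `true` = sink `y`. -/
abbrev Node : Type := (Fin G.T × G.V) ⊕ ((Fin G.T × G.B) ⊕ Bool)

/-- the source `x` -/
abbrev source : G.Node := Sum.inr (Sum.inr false)

/-- the sink `y` -/
abbrev sink : G.Node := Sum.inr (Sum.inr true)

/-- the copy of household node `v` in time step `t` -/
abbrev gridNode (t : Fin G.T) (v : G.V) : G.Node := Sum.inl (t, v)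

/-- the battery node `b_t` of agent `b` in time step `t` -/
abbrev batNode (t : Fin G.T) (b : G.B) : G.Node := Sum.inr (Sum.inl (t, b))

/-- The capacities of the graph `G_s` induced by a strategy profile
`s : B → Fin T → ℝ` (`s b t > 0` means agent `b` charges `s b t` in step `t`,
`s b t < 0` means she discharges `-(s b t)`).  Non-edges have capacity `0`. -/
def cap (s : G.B → Fin G.T → ℝ) : G.Node → G.Node → ℝ
  | Sum.inl (t, v), Sum.inl (t', v') =>
      if t = t' ∧ (v, v') ∈ G.E then G.κE t (v, v') else 0
  | Sum.inl (t, v), Sum.inr (Sum.inl (t', b)) =>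
      if t = t' ∧ G.loc b = v then max 0 (s b t') else 0
  | Sum.inr (Sum.inl (t, b)), Sum.inl (t', v) =>
      if t = t' ∧ G.loc b = v then max 0 (-(s b t)) else 0
  | Sum.inr (Sum.inl (t, b)), Sum.inr (Sum.inl (t', b')) =>
      if b = b' ∧ (t' : ℕ) = (t : ℕ) + 1 then G.κB b t else 0
  | Sum.inr (Sum.inr false), Sum.inl (t, v) => max 0 (G.d t v)
  | Sum.inl (t, v), Sum.inr (Sum.inr true) => max 0 (-(G.d t v))
  | _, _ => 0

/-- A feasible flow on the node set of `G` with capacities `c`. -/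
structure IsFlow (c : G.Node → G.Node → ℝ) (f : G.Node → G.Node → ℝ) : Prop where
  nonneg : ∀ u v, 0 ≤ f u v
  le_cap : ∀ u v, f u v ≤ c u v
  conserve : ∀ n, n ≠ G.source → n ≠ G.sink → (∑ u, f u n) = (∑ w, f n w)

/-- The value `|f|` of a flow: total flow leaving the source. -/
def value (f : G.Node → G.Node → ℝ) : ℝ := ∑ v, f G.source v

/-- `f` is a maximum flow for capacities `c`. -/
def IsMaxFlow (c : G.Node → G.Node → ℝ) (f : G.Node → G.Node → ℝ) : Prop :=
  G.IsFlow c f ∧ ∀ g, G.IsFlow c g → G.value g ≤ G.value f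

/-- Agent `b`'s strategy is admissible for the profile `s`:
every maximum flow in `G_s` saturates both transaction edges of `b` in every time step. -/
def Admissible (s : G.B → Fin G.T → ℝ) (b : G.B) : Prop :=
  ∀ f, G.IsMaxFlow (G.cap s) f → ∀ t : Fin G.T,
    f (G.gridNode t (G.loc b)) (G.batNode t b)
        = G.cap s (G.gridNode t (G.loc b)) (G.batNode t b) ∧
    f (G.batNode t b) (G.gridNode t (G.loc b))
        = G.cap s (G.batNode t b) (G.gridNode t (G.loc b))

/-- A valid strategy of agent `b`: all prefix sums lie between `0` and the battery
capacity (for every `t` with `t + 1 < T`, i.e. `t ∈ [T-1]` in 1-based indexing). -/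
def ValidStrategy (b : G.B) (sb : Fin G.T → ℝ) : Prop :=
  ∀ t : Fin G.T, (t : ℕ) + 1 < G.T →
    0 ≤ (∑ z ∈ Finset.Iic t, sb z) ∧ (∑ z ∈ Finset.Iic t, sb z) ≤ G.κB b t

/-- A valid strategy profile. -/
def ValidProfile (s : G.B → Fin G.T → ℝ) : Prop := ∀ b, G.ValidStrategy b (s b)

open scoped Classical in
/-- The utility of agent `b` under price profile `p` and strategy profile `s`:
`-∑ t, s b t * p t` if `b`'s strategy is admissible, and `-∞` otherwise. -/
noncomputable def utility (p : Fin G.T → ℝ) (s : G.B → Fin G.T → ℝ) (b : G.B) : EReal :=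
  if G.Admissible s b then ((-(∑ t, s b t * p t) : ℝ) : EReal) else ⊥

/-- `s` is a (pure) Nash equilibrium for the price profile `p`. -/
def IsNash (p : Fin G.T → ℝ) (s : G.B → Fin G.T → ℝ) : Prop :=
  G.ValidProfile s ∧
  ∀ b (sb' : Fin G.T → ℝ), G.ValidStrategy b sb' →
    ¬ G.utility p s b < G.utility p (Function.update s b sb') b

/-- `s` is a `k`-strong equilibrium for the price profile `p`: no nonempty coalition of
at most `k` agents has a joint deviation strictly improving the utility of each member. -/
def IsStrongEq (k : ℕ) (p : Fin G.T → ℝ) (s : G.B → Fin G.T → ℝ) : Prop :=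
  G.ValidProfile s ∧
  ∀ C : Finset G.B, C.Nonempty → C.card ≤ k →
    ∀ s' : G.B → Fin G.T → ℝ, (∀ b, G.ValidStrategy b (s' b)) →
      (∀ b ∉ C, s' b = s b) →
      ¬ ∀ b ∈ C, G.utility p s b < G.utility p s' b

/-- The welfare `W(s)` of a strategy profile `s`: the value of a maximum flow in `G_s`. -/
noncomputable def welfare (s : G.B → Fin G.T → ℝ) : ℝ :=
  sSup {r | ∃ f, G.IsFlow (G.cap s) f ∧ G.value f = r}

/-- The maximum welfare over all (valid) strategy profiles. -/
noncomputable def optWelfare : ℝ :=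
  sSup {r | ∃ s, G.ValidProfile s ∧ G.welfare s = r}

end ChargingGame
namespace ChargingGame
variable (G : ChargingGame)

lemma cap_nonneg (s : G.B → Fin G.T → ℝ) : ∀ u v, 0 ≤ G.cap s u v := by
  rintro (⟨t, v⟩ | ⟨⟨t, b⟩ | (_|_)⟩) (⟨t', v'⟩ | ⟨⟨t', b'⟩ | (_|_)⟩) <;>
    simp [cap] <;> split_ifs <;>
    first
      | positivity
      | exact G.κE_nonneg _ _
      | exact G.κB_nonneg _ _
      | exact le_rfl

lemma capQ1 (s : G.B → Fin G.T → ℝ) (t : Fin G.T) (b : G.B) :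
    G.cap s (G.gridNode t (G.loc b)) (G.batNode t b) = max 0 (s b t) := by
  simp [cap]

lemma capQ2 (s : G.B → Fin G.T → ℝ) (t : Fin G.T) (b : G.B) :
    G.cap s (G.batNode t b) (G.gridNode t (G.loc b)) = max 0 (-(s b t)) := by
  simp [cap]

end ChargingGame

namespace ChargingGame
variable (G : ChargingGame)

/-- first time step -/
def tA : Fin G.T := ⟨0, G.T_pos⟩

/-- second time step -/
def tB (hT : G.T = 2) : Fin G.T := ⟨1, by omega⟩

variable (hT : G.T = 2)

lemma cap_in_t0 (s : G.B → Fin G.T → ℝ) (b : G.B) (u : G.Node)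
    (hu : u ≠ G.gridNode G.tA (G.loc b)) : G.cap s u (G.batNode G.tA b) = 0 := by
  rcases u with ⟨t, v⟩ | ⟨⟨t, b'⟩ | (_|_)⟩
  · simp only [cap]
    rw [if_neg]
    rintro ⟨rfl, rfl⟩
    exact hu rfl
  · simp only [cap]
    rw [if_neg]
    rintro ⟨-, h⟩
    simp [tA] at h
  · rfl
  · rfl

lemma cap_out_t0 (s : G.B → Fin G.T → ℝ) (b : G.B) (w : G.Node)
    (h1 : w ≠ G.gridNode G.tA (G.loc b)) (h2 : w ≠ G.batNode (G.tB hT) b) :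
    G.cap s (G.batNode G.tA b) w = 0 := by
  rcases w with ⟨t, v⟩ | ⟨⟨t, b'⟩ | (_|_)⟩
  · simp only [cap]
    rw [if_neg]
    rintro ⟨rfl, rfl⟩
    exact h1 rfl
  · simp only [cap]
    rw [if_neg]
    rintro ⟨rfl, h⟩
    apply h2
    have : t = G.tB hT := by
      apply Fin.ext
      simp [tB, tA] at h ⊢
      omega
    rw [this]
  · rfl
  · rfl

lemma cap_in_t1 (s : G.B → Fin G.T → ℝ) (b : G.B) (u : G.Node)
    (h1 : u ≠ G.gridNode (G.tB hT) (G.loc b)) (h2 : u ≠ G.batNode G.tA b) :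
    G.cap s u (G.batNode (G.tB hT) b) = 0 := by
  rcases u with ⟨t, v⟩ | ⟨⟨t, b'⟩ | (_|_)⟩
  · simp only [cap]
    rw [if_neg]
    rintro ⟨rfl, rfl⟩
    exact h1 rfl
  · simp only [cap]
    rw [if_neg]
    rintro ⟨rfl, h⟩
    apply h2
    have : t = G.tA := by
      apply Fin.ext
      simp [tB, tA] at h ⊢
      omega
    rw [this]
  · rfl
  · rfl

lemma cap_out_t1 (s : G.B → Fin G.T → ℝ) (b : G.B) (w : G.Node)
    (h1 : w ≠ G.gridNode (G.tB hT) (G.loc b)) :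
    G.cap s (G.batNode (G.tB hT) b) w = 0 := by
  rcases w with ⟨t, v⟩ | ⟨⟨t, b'⟩ | (_|_)⟩
  · simp only [cap]
    rw [if_neg]
    rintro ⟨rfl, rfl⟩
    exact h1 rfl
  · simp only [cap]
    rw [if_neg]
    rintro ⟨-, h⟩
    have ht := t.isLt
    simp [tB] at h
    omega
  · rfl
  · rfl

end ChargingGame

namespace ChargingGame
variable (G : ChargingGame) (hT : G.T = 2)

lemma flow_zero_of_cap_zero {c f : G.Node → G.Node → ℝ} (hf : G.IsFlow c f)
    {u v : G.Node} (h : c u v = 0) : f u v = 0 :=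
  le_antisymm (h ▸ hf.le_cap u v) (hf.nonneg u v)

lemma flow_struct (s : G.B → Fin G.T → ℝ) (f : G.Node → G.Node → ℝ)
    (hf : G.IsFlow (G.cap s) f) (b : G.B) :
    f (G.gridNode G.tA (G.loc b)) (G.batNode G.tA b)
        = f (G.batNode G.tA b) (G.gridNode G.tA (G.loc b))
          + f (G.batNode G.tA b) (G.batNode (G.tB hT) b) ∧
    f (G.batNode G.tA b) (G.batNode (G.tB hT) b)
        + f (G.gridNode (G.tB hT) (G.loc b)) (G.batNode (G.tB hT) b)
        = f (G.batNode (G.tB hT) b) (G.gridNode (G.tB hT) (G.loc b)) := by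
  constructor
  · have hc := hf.conserve (G.batNode G.tA b) (by simp [source]) (by simp [sink])
    have hin : (∑ u, f u (G.batNode G.tA b)) = f (G.gridNode G.tA (G.loc b)) (G.batNode G.tA b) :=
      Finset.sum_eq_single_of_mem _ (Finset.mem_univ _)
        (fun u _ hu => G.flow_zero_of_cap_zero hf (G.cap_in_t0 s b u hu))
    have hpair : (G.gridNode G.tA (G.loc b)) ≠ (G.batNode (G.tB hT) b) := by simp
    have hout : (∑ w, f (G.batNode G.tA b) w)
        = f (G.batNode G.tA b) (G.gridNode G.tA (G.loc b))
          + f (G.batNode G.tA b) (G.batNode (G.tB hT) b) := by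
      rw [← Finset.sum_subset (Finset.subset_univ
          ({G.gridNode G.tA (G.loc b), G.batNode (G.tB hT) b} : Finset G.Node))
          (fun w _ hw => ?_), Finset.sum_pair hpair]
      refine G.flow_zero_of_cap_zero hf (G.cap_out_t0 hT s b w ?_ ?_) <;>
        · intro h; apply hw; simp [h]
    rw [← hin, ← hout, hc]
  · have hc := hf.conserve (G.batNode (G.tB hT) b) (by simp [source]) (by simp [sink])
    have hpair : (G.batNode G.tA b) ≠ (G.gridNode (G.tB hT) (G.loc b)) := by simp
    have hin : (∑ u, f u (G.batNode (G.tB hT) b))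
        = f (G.batNode G.tA b) (G.batNode (G.tB hT) b)
          + f (G.gridNode (G.tB hT) (G.loc b)) (G.batNode (G.tB hT) b) := by
      rw [← Finset.sum_subset (Finset.subset_univ
          ({G.batNode G.tA b, G.gridNode (G.tB hT) (G.loc b)} : Finset G.Node))
          (fun u _ hu => ?_), Finset.sum_pair hpair]
      refine G.flow_zero_of_cap_zero hf (G.cap_in_t1 hT s b u ?_ ?_) <;>
        · intro h; apply hu; simp [h]
    have hout : (∑ w, f (G.batNode (G.tB hT) b) w)
        = f (G.batNode (G.tB hT) b) (G.gridNode (G.tB hT) (G.loc b)) :=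
      Finset.sum_eq_single_of_mem _ (Finset.mem_univ _)
        (fun w _ hw => G.flow_zero_of_cap_zero hf (G.cap_out_t1 hT s b w hw))
    rw [← hin, ← hout, hc]

end ChargingGame

namespace ChargingGame
variable (G : ChargingGame)

lemma isClosed_flowSet (c : G.Node → G.Node → ℝ) : IsClosed {f | G.IsFlow c f} := by
  have hset : {f | G.IsFlow c f} =
      (⋂ u, ⋂ v, {f : G.Node → G.Node → ℝ | 0 ≤ f u v}) ∩
      ((⋂ u, ⋂ v, {f : G.Node → G.Node → ℝ | f u v ≤ c u v}) ∩
       (⋂ n, {f : G.Node → G.Node → ℝ |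
          n ≠ G.source → n ≠ G.sink → (∑ u, f u n) = (∑ w, f n w)})) := by
    ext f
    simp only [Set.mem_setOf_eq, Set.mem_inter_iff, Set.mem_iInter]
    exact ⟨fun h => ⟨h.1, h.2, h.3⟩, fun h => ⟨h.1, h.2.1, h.2.2⟩⟩
  have hev : ∀ u v : G.Node, Continuous (fun f : G.Node → G.Node → ℝ => f u v) :=
    fun u v => (continuous_apply v).comp (continuous_apply u)
  rw [hset]
  refine IsClosed.inter (isClosed_iInter fun u => isClosed_iInter fun v =>
      isClosed_le continuous_const (hev u v)) (IsClosed.inter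
      (isClosed_iInter fun u => isClosed_iInter fun v =>
        isClosed_le (hev u v) continuous_const) (isClosed_iInter fun n => ?_))
  by_cases h1 : n = G.source
  · have : {f : G.Node → G.Node → ℝ |
        n ≠ G.source → n ≠ G.sink → (∑ u, f u n) = (∑ w, f n w)} = Set.univ := by
      ext f; simp [h1]
    rw [this]; exact isClosed_univ
  by_cases h2 : n = G.sink
  · have : {f : G.Node → G.Node → ℝ |
        n ≠ G.source → n ≠ G.sink → (∑ u, f u n) = (∑ w, f n w)} = Set.univ := by
      ext f; simp [h2]
    rw [this]; exact isClosed_univ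
  have : {f : G.Node → G.Node → ℝ |
      n ≠ G.source → n ≠ G.sink → (∑ u, f u n) = (∑ w, f n w)} =
      {f : G.Node → G.Node → ℝ | (∑ u, f u n) = (∑ w, f n w)} := by
    ext f; simp [h1, h2]
  rw [this]
  exact isClosed_eq (continuous_finset_sum _ fun u _ => hev u n)
    (continuous_finset_sum _ fun w _ => hev n w)

lemma continuous_value : Continuous G.value := by
  unfold value
  exact continuous_finset_sum _ fun v _ => (continuous_apply v).comp (continuous_apply G.source)

lemma isFlow_zero (c : G.Node → G.Node → ℝ) (hc : ∀ u v, 0 ≤ c u v) :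
    G.IsFlow c (fun _ _ => 0) :=
  ⟨fun _ _ => le_rfl, fun u v => hc u v, fun _ _ _ => by simp⟩

lemma isCompact_flowSet (c : G.Node → G.Node → ℝ) (hc : ∀ u v, 0 ≤ c u v) :
    IsCompact {f | G.IsFlow c f} := by
  refine IsCompact.of_isClosed_subset (isCompact_Icc (a := fun _ _ => (0:ℝ)) (b := c))
    (G.isClosed_flowSet c) ?_
  intro f hf
  constructor
  · intro u; intro v; exact hf.nonneg u v
  · intro u; intro v; exact hf.le_cap u v

lemma exists_isMaxFlow (c : G.Node → G.Node → ℝ) (hc : ∀ u v, 0 ≤ c u v) :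
    ∃ f, G.IsMaxFlow c f := by
  obtain ⟨f, hf, hmax⟩ := (G.isCompact_flowSet c hc).exists_isMaxOn
    ⟨_, G.isFlow_zero c hc⟩ (G.continuous_value.continuousOn)
  exact ⟨f, hf, fun g hg => hmax hg⟩

end ChargingGame

namespace ChargingGame
variable (G : ChargingGame) (hT : G.T = 2)

lemma fin_two : ∀ t : Fin G.T, t = G.tA ∨ t = G.tB hT := by
  intro t
  have := t.isLt
  have h2 : (t : ℕ) = 0 ∨ (t : ℕ) = 1 := by omega
  rcases h2 with h | h
  · exact Or.inl (Fin.ext h)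
  · exact Or.inr (Fin.ext h)

lemma tA_ne_tB : G.tA ≠ G.tB hT := by
  intro h
  have := congrArg Fin.val h
  simp [tA, tB] at this

lemma sum_fin_two (g : Fin G.T → ℝ) : (∑ t, g t) = g G.tA + g (G.tB hT) := by
  have huniv : (Finset.univ : Finset (Fin G.T)) = {G.tA, G.tB hT} := by
    ext t
    simpa using G.fin_two hT t
  rw [huniv, Finset.sum_pair (G.tA_ne_tB hT)]

lemma Iic_tA : Finset.Iic G.tA = {G.tA} := by
  ext t
  simp only [Finset.mem_Iic, Finset.mem_singleton]
  constructor
  · intro h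
    exact Fin.ext (Nat.le_zero.mp h)
  · rintro rfl; exact le_rfl

lemma utility_eq (p : Fin G.T → ℝ) (s : G.B → Fin G.T → ℝ) (b : G.B)
    (h : G.Admissible s b) :
    G.utility p s b = ((-(s b G.tA * p G.tA + s b (G.tB hT) * p (G.tB hT)) : ℝ) : EReal) := by
  rw [utility, if_pos h, G.sum_fin_two hT]

lemma admissible_shape (s : G.B → Fin G.T → ℝ) (b : G.B) (h0 : 0 ≤ s b G.tA)
    (hadm : G.Admissible s b) : s b (G.tB hT) = -(s b G.tA) := by
  obtain ⟨f, hf⟩ := G.exists_isMaxFlow (G.cap s) (G.cap_nonneg s)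
  have h1 := hadm f hf G.tA
  have h2 := hadm f hf (G.tB hT)
  rw [G.capQ1, G.capQ2] at h1
  rw [G.capQ1, G.capQ2] at h2
  obtain ⟨hs1, hs2⟩ := G.flow_struct hT s f hf.1 b
  rw [h1.1, h1.2, h2.1, h2.2] at *
  rw [max_eq_right h0, max_eq_left (neg_nonpos.mpr h0)] at hs1
  rcases le_or_gt (s b (G.tB hT)) 0 with h | h
  · rw [max_eq_left h, max_eq_right (neg_nonneg.mpr h)] at hs2
    linarith
  · rw [max_eq_right h.le, max_eq_left (by linarith)] at hs2
    linarith

end ChargingGame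

namespace ChargingGame
variable (G : ChargingGame)

/-- the strategy "charge `x` in step 0, discharge `x` in step 1" -/
def stratOf (x : ℝ) : Fin G.T → ℝ := fun t => if (t : ℕ) = 0 then x else -x

/-- the profile of such strategies given throughputs `a` -/
def profileOf (a : G.B → ℝ) : G.B → Fin G.T → ℝ := fun b => G.stratOf (a b)

lemma stratOf_tA (x : ℝ) : G.stratOf x G.tA = x := if_pos rfl

lemma stratOf_tB (hT : G.T = 2) (x : ℝ) : G.stratOf x (G.tB hT) = -x := by
  simp [stratOf, tB]

lemma cap_mono (a a' : G.B → ℝ) (h0 : ∀ b, 0 ≤ a b) (hle : ∀ b, a b ≤ a' b) :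
    ∀ u v, G.cap (G.profileOf a) u v ≤ G.cap (G.profileOf a') u v := by
  have h0' : ∀ b, 0 ≤ a' b := fun b => (h0 b).trans (hle b)
  rintro (⟨t, v⟩ | ⟨⟨t, b⟩ | (_|_)⟩) (⟨t', v'⟩ | ⟨⟨t', b'⟩ | (_|_)⟩) <;>
    simp only [cap, profileOf, stratOf] <;> (try split_ifs) <;>
    first
      | exact le_rfl
      | exact max_le_max le_rfl (hle _)
      | (rw [neg_neg, neg_neg]; exact max_le_max le_rfl (hle _))
      | (rw [max_eq_left (neg_nonpos.mpr (h0 _)),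
             max_eq_left (neg_nonpos.mpr (h0' _))])

lemma cap_eq_of_agree (a a' : G.B → ℝ) (b : G.B) (hag : ∀ b', b' ≠ b → a b' = a' b') :
    ∀ u v, G.cap (G.profileOf a) u v = G.cap (G.profileOf a') u v ∨
      (∃ t : Fin G.T, (u = G.gridNode t (G.loc b) ∧ v = G.batNode t b) ∨
        (u = G.batNode t b ∧ v = G.gridNode t (G.loc b))) := by
  rintro (⟨t, v⟩ | ⟨⟨t, b₀⟩ | (_|_)⟩) (⟨t', v'⟩ | ⟨⟨t', b'⟩ | (_|_)⟩) <;>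
    try { exact Or.inl rfl }
  · -- grid → battery
    simp only [cap]
    split_ifs with hcond
    · by_cases hb : b' = b
      · subst hb
        exact Or.inr ⟨t', Or.inl ⟨by rw [hcond.1, hcond.2], rfl⟩⟩
      · rw [show G.profileOf a b' = G.profileOf a' b' by
          simp only [profileOf]; rw [hag b' hb]]
        exact Or.inl rfl
    · exact Or.inl rfl
  · -- battery → grid
    simp only [cap]
    split_ifs with hcond
    · by_cases hb : b₀ = b
      · subst hb
        exact Or.inr ⟨t, Or.inr ⟨rfl, by rw [hcond.1, hcond.2]⟩⟩
      · rw [show G.profileOf a b₀ = G.profileOf a' b₀ by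
          simp only [profileOf]; rw [hag b₀ hb]]
        exact Or.inl rfl
    · exact Or.inl rfl

end ChargingGame

namespace ChargingGame
variable (G : ChargingGame)

lemma continuous_cap_entry (u v : G.Node) :
    Continuous (fun a : G.B → ℝ => G.cap (G.profileOf a) u v) := by
  have key : ∀ (b : G.B) (t : Fin G.T),
      Continuous (fun a : G.B → ℝ => G.stratOf (a b) t) := by
    intro b t
    exact Continuous.if_const _ (continuous_apply b) (continuous_apply b).neg
  rcases u with ⟨t, v₀⟩ | ⟨⟨t, b₀⟩ | (_|_)⟩ <;> rcases v with ⟨t', v'⟩ | ⟨⟨t', b'⟩ | (_|_)⟩ <;>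
    simp only [cap, profileOf] <;>
    first
      | exact continuous_const
      | exact Continuous.if_const _ (continuous_const.max (key _ _)) continuous_const
      | exact Continuous.if_const _ (continuous_const.max (key _ _).neg) continuous_const

lemma valid_bounds (hT : G.T = 2) (b : G.B) (sb : Fin G.T → ℝ)
    (h : G.ValidStrategy b sb) : 0 ≤ sb G.tA ∧ sb G.tA ≤ G.κB b G.tA := by
  have h1 := h G.tA (by simp [tA]; omega)
  rwa [G.Iic_tA, Finset.sum_singleton] at h1

lemma validStrategy_stratOf (hT : G.T = 2) (b : G.B) (x : ℝ) (hx0 : 0 ≤ x)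
    (hxκ : x ≤ G.κB b G.tA) : G.ValidStrategy b (G.stratOf x) := by
  intro t ht
  have htA : t = G.tA := by
    apply Fin.ext
    simp [tA]
    omega
  subst htA
  rw [G.Iic_tA, Finset.sum_singleton, G.stratOf_tA]
  exact ⟨hx0, hxκ⟩

lemma validProfile_profileOf (hT : G.T = 2) (a : G.B → ℝ) (h0 : ∀ b, 0 ≤ a b)
    (hκ : ∀ b, a b ≤ G.κB b G.tA) : G.ValidProfile (G.profileOf a) :=
  fun b => G.validStrategy_stratOf hT b (a b) (h0 b) (hκ b)

lemma profile_update (hT : G.T = 2) (a : G.B → ℝ) (b : G.B) (sb' : Fin G.T → ℝ)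
    (h1 : sb' (G.tB hT) = -(sb' G.tA)) :
    Function.update (G.profileOf a) b sb' = G.profileOf (Function.update a b (sb' G.tA)) := by
  funext b'
  by_cases hb : b' = b
  · subst hb
    simp only [Function.update_self, profileOf]
    funext t
    rcases G.fin_two hT t with rfl | rfl
    · rw [G.stratOf_tA]
    · rw [G.stratOf_tB hT, h1]
  · simp only [Function.update_of_ne hb, profileOf]

end ChargingGame

namespace ChargingGame
variable (G : ChargingGame)

lemma admissible_zero : ∀ b, G.Admissible (fun _ _ => (0:ℝ)) b := by
  intro b f hf t
  have h1 : G.cap (fun _ _ => (0:ℝ)) (G.gridNode t (G.loc b)) (G.batNode t b) = 0 := by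
    rw [G.capQ1]; simp
  have h2 : G.cap (fun _ _ => (0:ℝ)) (G.batNode t b) (G.gridNode t (G.loc b)) = 0 := by
    rw [G.capQ2]; simp
  rw [h1, h2]
  exact ⟨G.flow_zero_of_cap_zero hf.1 h1, G.flow_zero_of_cap_zero hf.1 h2⟩

variable (hT : G.T = 2)

lemma cap_charge0 (a : G.B → ℝ) (b : G.B) (h : 0 ≤ a b) :
    G.cap (G.profileOf a) (G.gridNode G.tA (G.loc b)) (G.batNode G.tA b) = a b := by
  rw [G.capQ1]; simp only [profileOf, G.stratOf_tA]; exact max_eq_right h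

lemma cap_discharge0 (a : G.B → ℝ) (b : G.B) (h : 0 ≤ a b) :
    G.cap (G.profileOf a) (G.batNode G.tA b) (G.gridNode G.tA (G.loc b)) = 0 := by
  rw [G.capQ2]; simp only [profileOf, G.stratOf_tA]
  exact max_eq_left (neg_nonpos.mpr h)

lemma cap_charge1 (a : G.B → ℝ) (b : G.B) (h : 0 ≤ a b) :
    G.cap (G.profileOf a) (G.gridNode (G.tB hT) (G.loc b)) (G.batNode (G.tB hT) b) = 0 := by
  rw [G.capQ1]; simp only [profileOf, G.stratOf_tB hT]
  exact max_eq_left (neg_nonpos.mpr h)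

lemma cap_discharge1 (a : G.B → ℝ) (b : G.B) (h : 0 ≤ a b) :
    G.cap (G.profileOf a) (G.batNode (G.tB hT) b) (G.gridNode (G.tB hT) (G.loc b)) = a b := by
  rw [G.capQ2]; simp only [profileOf, G.stratOf_tB hT, neg_neg]; exact max_eq_right h

lemma isClosed_flowPair :
    IsClosed {cf : (G.Node → G.Node → ℝ) × (G.Node → G.Node → ℝ) | G.IsFlow cf.1 cf.2} := by
  have hev : ∀ u v : G.Node,
      Continuous (fun f : G.Node → G.Node → ℝ => f u v) :=
    fun u v => (continuous_apply v).comp (continuous_apply u)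
  have hset : {cf : (G.Node → G.Node → ℝ) × (G.Node → G.Node → ℝ) | G.IsFlow cf.1 cf.2} =
      (⋂ u, ⋂ v, {cf : (G.Node → G.Node → ℝ) × (G.Node → G.Node → ℝ) | 0 ≤ cf.2 u v}) ∩
      ((⋂ u, ⋂ v, {cf : (G.Node → G.Node → ℝ) × (G.Node → G.Node → ℝ) |
          cf.2 u v ≤ cf.1 u v}) ∩
       (⋂ n, {cf : (G.Node → G.Node → ℝ) × (G.Node → G.Node → ℝ) |
          n ≠ G.source → n ≠ G.sink → (∑ u, cf.2 u n) = (∑ w, cf.2 n w)})) := by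
    ext cf
    simp only [Set.mem_setOf_eq, Set.mem_inter_iff, Set.mem_iInter]
    exact ⟨fun h => ⟨h.1, h.2, h.3⟩, fun h => ⟨h.1, h.2.1, h.2.2⟩⟩
  rw [hset]
  refine IsClosed.inter (isClosed_iInter fun u => isClosed_iInter fun v =>
      isClosed_le continuous_const ((hev u v).comp continuous_snd)) (IsClosed.inter
      (isClosed_iInter fun u => isClosed_iInter fun v =>
        isClosed_le ((hev u v).comp continuous_snd) ((hev u v).comp continuous_fst))
      (isClosed_iInter fun n => ?_))
  by_cases h1 : n = G.source
  · have : {cf : (G.Node → G.Node → ℝ) × (G.Node → G.Node → ℝ) |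
        n ≠ G.source → n ≠ G.sink → (∑ u, cf.2 u n) = (∑ w, cf.2 n w)} = Set.univ := by
      ext cf; simp [h1]
    rw [this]; exact isClosed_univ
  by_cases h2 : n = G.sink
  · have : {cf : (G.Node → G.Node → ℝ) × (G.Node → G.Node → ℝ) |
        n ≠ G.source → n ≠ G.sink → (∑ u, cf.2 u n) = (∑ w, cf.2 n w)} = Set.univ := by
      ext cf; simp [h2]
    rw [this]; exact isClosed_univ
  have : {cf : (G.Node → G.Node → ℝ) × (G.Node → G.Node → ℝ) |
      n ≠ G.source → n ≠ G.sink → (∑ u, cf.2 u n) = (∑ w, cf.2 n w)} =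
      {cf : (G.Node → G.Node → ℝ) × (G.Node → G.Node → ℝ) |
        (∑ u, cf.2 u n) = (∑ w, cf.2 n w)} := by
    ext cf; simp [h1, h2]
  rw [this]
  exact isClosed_eq (continuous_finset_sum _ fun u _ => (hev u n).comp continuous_snd)
    (continuous_finset_sum _ fun w _ => (hev n w).comp continuous_snd)

end ChargingGame

namespace ChargingGame
variable (G : ChargingGame)

lemma exists_opt (hT : G.T = 2) : ∃ a : G.B → ℝ, (∀ b, 0 ≤ a b ∧ a b ≤ G.κB b G.tA) ∧
    (∀ b, G.Admissible (G.profileOf a) b) ∧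
    (∀ b x, 0 ≤ x → x ≤ G.κB b G.tA →
      G.Admissible (G.profileOf (Function.update a b x)) b → x ≤ a b) := by
  classical
  set κ : G.B → ℝ := fun b => G.κB b G.tA with hκdef
  have hκ0 : ∀ b, 0 ≤ κ b := fun b => G.κB_nonneg b G.tA
  set Φ : Set ((G.B → ℝ) × (G.Node → G.Node → ℝ)) :=
    {af | af.1 ∈ Set.Icc 0 κ ∧ G.IsFlow (G.cap (G.profileOf af.1)) af.2} with hΦdef
  -- upper and lower coordinate bounds for members of Φ
  have hmem0 : ∀ af ∈ Φ, ∀ b, 0 ≤ af.1 b := fun af h b => h.1.1 b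
  have hmemκ : ∀ af ∈ Φ, ∀ b, af.1 b ≤ κ b := fun af h b => h.1.2 b
  -- Φ is compact
  have hΦclosed : IsClosed Φ := by
    have h1 : IsClosed ((Prod.fst : (G.B → ℝ) × (G.Node → G.Node → ℝ) → (G.B → ℝ)) ⁻¹'
        Set.Icc 0 κ) := IsClosed.preimage continuous_fst isClosed_Icc
    refine IsClosed.inter h1 ?_
    have hcont : Continuous (fun af : (G.B → ℝ) × (G.Node → G.Node → ℝ) =>
        ((G.cap (G.profileOf af.1), af.2) :
          (G.Node → G.Node → ℝ) × (G.Node → G.Node → ℝ))) := by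
      refine Continuous.prodMk ?_ continuous_snd
      exact continuous_pi fun u => continuous_pi fun v =>
        (G.continuous_cap_entry u v).comp continuous_fst
    exact G.isClosed_flowPair.preimage hcont
  have hΦsub : Φ ⊆ Set.Icc 0 κ ×ˢ Set.Icc (fun _ _ => (0:ℝ)) (G.cap (G.profileOf κ)) := by
    rintro ⟨a, f⟩ ⟨h1, h2⟩
    refine Set.mem_prod.mpr ⟨h1, ?_, ?_⟩
    · intro u; intro v; exact h2.nonneg u v
    · intro u; intro v
      exact (h2.le_cap u v).trans (G.cap_mono a κ (fun b => h1.1 b) (fun b => h1.2 b) u v)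
  have hΦcomp : IsCompact Φ :=
    IsCompact.of_isClosed_subset ((isCompact_Icc (a := (0 : G.B → ℝ)) (b := κ)).prod (isCompact_Icc (a := fun _ _ => (0:ℝ)) (b := G.cap (G.profileOf κ)))) hΦclosed hΦsub
  have hΦne : Φ.Nonempty := by
    refine ⟨(0, fun _ _ => 0), Set.mem_Icc.mpr ⟨le_rfl, fun b => hκ0 b⟩, ?_⟩
    exact G.isFlow_zero _ (G.cap_nonneg _)
  have hvalcont : Continuous (fun af : (G.B → ℝ) × (G.Node → G.Node → ℝ) =>
      G.value af.2) := G.continuous_value.comp continuous_snd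
  obtain ⟨⟨aW, fW⟩, hWmem, hWmax⟩ := hΦcomp.exists_isMaxOn hΦne hvalcont.continuousOn
  set W : ℝ := G.value fW with hWdef
  have hub : ∀ a f, a ∈ Set.Icc 0 κ → G.IsFlow (G.cap (G.profileOf a)) f →
      G.value f ≤ W := fun a f h1 h2 => isMaxOn_iff.mp hWmax (a, f) ⟨h1, h2⟩
  -- the set of profiles achieving welfare W
  set A : Set (G.B → ℝ) :=
    {a | a ∈ Set.Icc 0 κ ∧ ∃ f, G.IsFlow (G.cap (G.profileOf a)) f ∧ G.value f = W}
    with hAdef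
  have hAimg : A = Prod.fst '' (Φ ∩ {af | G.value af.2 = W}) := by
    ext a
    constructor
    · rintro ⟨hIcc, f, hf, hv⟩
      exact ⟨(a, f), ⟨⟨hIcc, hf⟩, hv⟩, rfl⟩
    · rintro ⟨⟨a', f⟩, ⟨⟨hIcc, hf⟩, hv⟩, rfl⟩
      exact ⟨hIcc, f, hf, hv⟩
  have hAcomp : IsCompact A := by
    rw [hAimg]
    exact (hΦcomp.inter_right (isClosed_eq hvalcont continuous_const)).image continuous_fst
  have hAne : A.Nonempty := ⟨aW, hWmem.1, fW, hWmem.2, rfl⟩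
  have hsumcont : Continuous (fun a : G.B → ℝ => ∑ b, a b) :=
    continuous_finset_sum _ fun b _ => continuous_apply b
  obtain ⟨a₀, ha₀A, hmin⟩ := hAcomp.exists_isMinOn hAne hsumcont.continuousOn
  have hminle : ∀ a ∈ A, (∑ b, a₀ b) ≤ ∑ b, a b := fun a ha => isMinOn_iff.mp hmin a ha
  obtain ⟨hIcc, f₀, hf₀, hv₀⟩ := ha₀A
  have h0b : ∀ b, 0 ≤ a₀ b := fun b => hIcc.1 b
  have hκb : ∀ b, a₀ b ≤ κ b := fun b => hIcc.2 b
  refine ⟨a₀, fun b => ⟨h0b b, hκb b⟩, ?_, ?_⟩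
  · -- admissibility of the optimal profile
    intro b f hf
    have hWf : G.value f = W :=
      le_antisymm (hub a₀ f hIcc hf.1) (hv₀ ▸ hf.2 f₀ hf₀)
    obtain ⟨hc1, hc2⟩ := G.flow_struct hT (G.profileOf a₀) f hf.1 b
    have hz1 : f (G.batNode G.tA b) (G.gridNode G.tA (G.loc b)) = 0 :=
      G.flow_zero_of_cap_zero hf.1 (G.cap_discharge0 a₀ b (h0b b))
    have hz2 : f (G.gridNode (G.tB hT) (G.loc b)) (G.batNode (G.tB hT) b) = 0 :=
      G.flow_zero_of_cap_zero hf.1 (G.cap_charge1 hT a₀ b (h0b b))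
    set y : ℝ := f (G.gridNode G.tA (G.loc b)) (G.batNode G.tA b) with hydef
    have hyB : f (G.batNode G.tA b) (G.batNode (G.tB hT) b) = y := by
      rw [hz1] at hc1; linarith
    have hyD : f (G.batNode (G.tB hT) b) (G.gridNode (G.tB hT) (G.loc b)) = y := by
      rw [hz2, hyB] at hc2; linarith
    have hy0 : 0 ≤ y := hf.1.nonneg _ _
    have hylea : y ≤ a₀ b :=
      (hf.1.le_cap _ _).trans_eq (G.cap_charge0 a₀ b (h0b b))
    have heq : y = a₀ b := by
      by_contra hne
      have hlt : y < a₀ b := lt_of_le_of_ne hylea hne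
      set a' : G.B → ℝ := Function.update a₀ b y with ha'def
      have ha'b : a' b = y := Function.update_self b y a₀
      have ha'0 : ∀ b', 0 ≤ a' b' := by
        intro b'
        by_cases hb : b' = b
        · rw [hb, ha'b]; exact hy0
        · rw [ha'def, Function.update_of_ne hb]; exact h0b b'
      have hf' : G.IsFlow (G.cap (G.profileOf a')) f := by
        refine ⟨hf.1.nonneg, ?_, hf.1.conserve⟩
        intro u v
        rcases G.cap_eq_of_agree a₀ a' b
            (fun b' hb' => (Function.update_of_ne hb' _ _).symm) u v with
          he | ⟨t', hts⟩
        · exact he ▸ hf.1.le_cap u v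
        · rcases G.fin_two hT t' with rfl | rfl
          · rcases hts with ⟨rfl, rfl⟩ | ⟨rfl, rfl⟩
            · rw [G.cap_charge0 a' b (ha'0 b), ha'b]
            · rw [G.cap_discharge0 a' b (ha'0 b), hz1]
          · rcases hts with ⟨rfl, rfl⟩ | ⟨rfl, rfl⟩
            · rw [G.cap_charge1 hT a' b (ha'0 b), hz2]
            · rw [G.cap_discharge1 hT a' b (ha'0 b), ha'b, hyD]
      have ha'A : a' ∈ A := by
        refine ⟨Set.mem_Icc.mpr ⟨fun b' => ha'0 b', fun b' => ?_⟩, f, hf', hWf⟩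
        by_cases hb : b' = b
        · rw [hb, ha'b]; exact hylea.trans (hκb b)
        · rw [ha'def, Function.update_of_ne hb]; exact hκb b'
      have hsum : (∑ b', a' b') < ∑ b', a₀ b' := by
        rw [ha'def, Finset.sum_update_of_mem (Finset.mem_univ b)]
        have := Finset.add_sum_erase Finset.univ a₀ (Finset.mem_univ b)
        rw [Finset.sdiff_singleton_eq_erase]
        linarith
      exact absurd (hminle a' ha'A) (not_le.mpr hsum)
    intro t
    rcases G.fin_two hT t with rfl | rfl
    · rw [G.cap_charge0 a₀ b (h0b b), G.cap_discharge0 a₀ b (h0b b)]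
      exact ⟨heq ▸ rfl, hz1⟩
    · rw [G.cap_charge1 hT a₀ b (h0b b), G.cap_discharge1 hT a₀ b (h0b b)]
      exact ⟨hz2, heq ▸ hyD⟩
  · -- maximality: no admissible unilateral increase
    intro b x hx0 hxκ hadm
    by_contra hxgt
    push_neg at hxgt
    set aN : G.B → ℝ := Function.update a₀ b x with haNdef
    have haNb : aN b = x := Function.update_self b x a₀
    have haN0 : ∀ b', 0 ≤ aN b' := by
      intro b'
      by_cases hb : b' = b
      · rw [hb, haNb]; exact hx0
      · rw [haNdef, Function.update_of_ne hb]; exact h0b b'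
    have haNκ : ∀ b', aN b' ≤ κ b' := by
      intro b'
      by_cases hb : b' = b
      · rw [hb, haNb]; exact hxκ
      · rw [haNdef, Function.update_of_ne hb]; exact hκb b'
    have hle : ∀ b', a₀ b' ≤ aN b' := by
      intro b'
      by_cases hb : b' = b
      · rw [hb, haNb]; exact hxgt.le
      · rw [haNdef, Function.update_of_ne hb]
    have hfN : G.IsFlow (G.cap (G.profileOf aN)) f₀ :=
      ⟨hf₀.nonneg, fun u v => (hf₀.le_cap u v).trans (G.cap_mono a₀ aN h0b hle u v),
        hf₀.conserve⟩
    have hfNmax : G.IsMaxFlow (G.cap (G.profileOf aN)) f₀ :=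
      ⟨hfN, fun g hg => (hub aN g (Set.mem_Icc.mpr ⟨fun b' => haN0 b',
        fun b' => haNκ b'⟩) hg).trans_eq hv₀.symm⟩
    have hsat := (hadm f₀ hfNmax G.tA).1
    rw [G.cap_charge0 aN b (haN0 b), haNb] at hsat
    have hbound : f₀ (G.gridNode G.tA (G.loc b)) (G.batNode G.tA b) ≤ a₀ b :=
      (hf₀.le_cap _ _).trans_eq (G.cap_charge0 a₀ b (h0b b))
    rw [hsat] at hbound
    exact absurd hbound (not_le.mpr hxgt)

end ChargingGame

/-- For every instance with `T = 2` time steps and every price profile,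
there exists a Nash equilibrium. -/
theorem exists_nash_of_two_steps (G : ChargingGame) (hT : G.T = 2)
    (p : Fin G.T → ℝ) :
    ∃ s : G.B → Fin G.T → ℝ, G.IsNash p s := by
  classical
  rcases le_or_gt (p (G.tB hT)) (p G.tA) with hq | hq
  · -- the zero profile is a Nash equilibrium when prices do not increase
    refine ⟨fun _ _ => 0, ?_, ?_⟩
    · intro b t ht
      refine ⟨by simp, ?_⟩
      simpa using G.κB_nonneg b t
    · intro b sb' hsb' hlt
      by_cases hadm : G.Admissible (Function.update (fun _ _ => (0:ℝ)) b sb') b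
      · have hub := G.valid_bounds hT b sb' hsb'
        have hupd : Function.update (fun _ _ => (0:ℝ)) b sb' b = sb' :=
          Function.update_self _ _ _
        have hsh : sb' (G.tB hT) = -(sb' G.tA) := by
          have h := G.admissible_shape hT _ b (by rw [hupd]; exact hub.1) hadm
          rwa [hupd] at h
        have hu0 : G.utility p (fun _ _ => 0) b = ((0:ℝ) : EReal) := by
          rw [G.utility_eq hT p _ b (G.admissible_zero b)]
          norm_num
        have hu1 : G.utility p (Function.update (fun _ _ => (0:ℝ)) b sb') b
            = ((-(sb' G.tA * p G.tA + sb' (G.tB hT) * p (G.tB hT)) : ℝ) : EReal) := by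
          rw [G.utility_eq hT p _ b hadm, hupd]
        rw [hu0, hu1] at hlt
        have hlt' := EReal.coe_lt_coe_iff.mp hlt
        rw [hsh] at hlt'
        nlinarith [mul_nonneg hub.1 (sub_nonneg.mpr hq)]
      · simp only [ChargingGame.utility, if_neg hadm] at hlt
        exact not_lt_bot hlt
  · -- increasing prices: use the welfare-optimal profile with minimal total charging
    obtain ⟨a₀, hbounds, hadm, hmaxi⟩ := G.exists_opt hT
    refine ⟨G.profileOf a₀,
      G.validProfile_profileOf hT a₀ (fun b => (hbounds b).1) (fun b => (hbounds b).2), ?_⟩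
    intro b sb' hsb' hlt
    by_cases hadm' : G.Admissible (Function.update (G.profileOf a₀) b sb') b
    · have hub := G.valid_bounds hT b sb' hsb'
      have hupd : Function.update (G.profileOf a₀) b sb' b = sb' :=
        Function.update_self _ _ _
      have hsh : sb' (G.tB hT) = -(sb' G.tA) := by
        have h := G.admissible_shape hT _ b (by rw [hupd]; exact hub.1) hadm'
        rwa [hupd] at h
      have hcur : G.utility p (G.profileOf a₀) b
          = ((-(a₀ b * p G.tA + (-(a₀ b)) * p (G.tB hT)) : ℝ) : EReal) := by
        rw [G.utility_eq hT p _ b (hadm b)]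
        simp only [ChargingGame.profileOf, G.stratOf_tA, G.stratOf_tB hT]
      have hdev : G.utility p (Function.update (G.profileOf a₀) b sb') b
          = ((-(sb' G.tA * p G.tA + (-(sb' G.tA)) * p (G.tB hT)) : ℝ) : EReal) := by
        rw [G.utility_eq hT p _ b hadm', hupd, hsh]
      rw [hcur, hdev] at hlt
      have hlt' := EReal.coe_lt_coe_iff.mp hlt
      have hxgt : a₀ b < sb' G.tA := by
        by_contra hcon
        push_neg at hcon
        nlinarith [mul_nonneg (sub_nonneg.mpr hcon) (sub_nonneg.mpr hq.le)]
      have hprofupd : Function.update (G.profileOf a₀) b sb'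
          = G.profileOf (Function.update a₀ b (sb' G.tA)) :=
        G.profile_update hT a₀ b sb' hsh
      have hle := hmaxi b (sb' G.tA) hub.1 hub.2 (by rw [← hprofupd]; exact hadm')
      exact absurd hle (not_le.mpr hxgt)
    · simp only [ChargingGame.utility, if_neg hadm'] at hlt
      exact not_lt_bot hlt
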